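/- Let k be a field of characteristic ≠ 2, ℓ/k a quadratic field extension, and c = (c₁, c₂, c₃) ∈ k³ an ℓ-admissible triple. For a ∈ ℓ, a ≠ 0, define φ_a, ψ_a : ℓ × ℓ → ℓ × ℓ by φ_a(x, y) = (x, a y) and ψ_a(x, y) = (σ(x), a σ(y)). Then: (i) if c₂ = 0, the subgroup of Aut(A(ℓ, c)) generated by φ_{−1} and ψ₁ is a proper subgroup; (ii) if c₂ ≠ 0, then Aut(A(ℓ, c)) = {φ₁, φ_{−1}, ψ₁, ψ_{−1}} is exactly the subgroup generated by φ_{−1} and ψ₁, which is Klein's four-group. -/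

import Mathlib

open Module Function

variable {k ℓ : Type}

/-- The function `q_c : ℓ × ℓ → ℓ` associated with a triple `c = (c₁, c₂, c₃) ∈ k³`. -/
def qc [Field k] [Field ℓ] [Algebra k ℓ] (σ : ℓ ≃ₐ[k] ℓ) (c : k × k × k) (x y : ℓ) : ℓ :=
  (1 - algebraMap k ℓ c.1) * x ^ 2 + algebraMap k ℓ c.1 * (x * σ x)
    - algebraMap k ℓ c.2.1 * y ^ 2 - algebraMap k ℓ c.2.2 * (y * σ y)

/-- A triple `c ∈ k³` is `ℓ`-admissible if `q_c` is anisotropic. -/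
def IsAdmissibleTriple [Field k] [Field ℓ] [Algebra k ℓ] (σ : ℓ ≃ₐ[k] ℓ)
    (c : k × k × k) : Prop :=
  ∀ x y : ℓ, qc σ c x y = 0 → x = 0 ∧ y = 0

/-- The multiplication of the 4-dimensional `k`-algebra `A(ℓ, c)` on `ℓ × ℓ`. -/
def Amul [Field k] [Field ℓ] [Algebra k ℓ] (σ : ℓ ≃ₐ[k] ℓ) (c : k × k × k)
    (p q : ℓ × ℓ) : ℓ × ℓ :=
  (p.1 * q.1 + (algebraMap k ℓ c.2.1 * p.2 + algebraMap k ℓ c.2.2 * σ p.2) * q.2,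
   p.2 * q.1 + ((1 - algebraMap k ℓ c.1) * p.1 + algebraMap k ℓ c.1 * σ p.1) * q.2)

/-- The map `φ_a(x, y) = (x, a·y)`. -/
def phiMap [Field ℓ] (a : ℓ) (p : ℓ × ℓ) : ℓ × ℓ := (p.1, a * p.2)

/-- The map `ψ_a(x, y) = (σ(x), a·σ(y))`. -/
def psiMap [Field k] [Field ℓ] [Algebra k ℓ] (σ : ℓ ≃ₐ[k] ℓ) (a : ℓ) (p : ℓ × ℓ) :
    ℓ × ℓ := (σ p.1, a * σ p.2)

/-- `μ` is an automorphism of the `k`-algebra `A(ℓ, c)`: a `k`-linear bijection preserving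
the multiplication. -/
def IsAuto [Field k] [Field ℓ] [Algebra k ℓ] (σ : ℓ ≃ₐ[k] ℓ) (c : k × k × k)
    (μ : ℓ × ℓ → ℓ × ℓ) : Prop :=
  Function.Bijective μ ∧
  (∀ p q : ℓ × ℓ, μ (p + q) = μ p + μ q) ∧
  (∀ (t : k) (p : ℓ × ℓ), μ (t • p) = t • μ p) ∧
  (∀ p q : ℓ × ℓ, μ (Amul σ c p q) = Amul σ c (μ p) (μ q))


lemma two_ne_zero_l [Field k] [Field ℓ] [Algebra k ℓ] (hchar : (2:k) ≠ 0) : (2:ℓ) ≠ 0 := by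
  intro h
  apply hchar
  apply (algebraMap k ℓ).injective
  rw [map_ofNat, map_zero]
  exact_mod_cast h

lemma algebraMap_ne_zero [Field k] [Field ℓ] [Algebra k ℓ] {s : k} (hs : s ≠ 0) :
    algebraMap k ℓ s ≠ 0 := by
  simpa using fun h => hs ((algebraMap k ℓ).injective (by rw [h, map_zero]))

lemma quadStruct [Field k] [Field ℓ] [Algebra k ℓ] (hchar : (2:k) ≠ 0)
    (hquad : finrank k ℓ = 2) (σ : ℓ ≃ₐ[k] ℓ) (hσ : ∃ x : ℓ, σ x ≠ x) :
    ∃ δ : ℓ, δ ≠ 0 ∧ σ δ = -δ ∧ (∀ x, σ (σ x) = x) ∧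
      ∀ w : ℓ, ∃ s t : k, w = algebraMap k ℓ s + algebraMap k ℓ t * δ := by
  obtain ⟨x₀, hx₀⟩ := hσ
  have h2 : (2:ℓ) ≠ 0 := two_ne_zero_l hchar
  have hfix : ∀ s : k, σ (algebraMap k ℓ s) = algebraMap k ℓ s := fun s => σ.commutes s
  have hnot : ∀ s : k, x₀ ≠ algebraMap k ℓ s := by
    intro s h
    exact hx₀ (by rw [h, hfix])
  have hli : LinearIndependent k ![x₀, (1:ℓ)] := by
    rw [LinearIndependent.pair_iff]
    intro s t hst
    have hst' : algebraMap k ℓ s * x₀ + algebraMap k ℓ t = 0 := by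
      simpa [Algebra.smul_def] using hst
    have hs0 : s = 0 := by
      by_contra hs
      have hFs : algebraMap k ℓ s ≠ 0 := algebraMap_ne_zero hs
      apply hnot (-t/s)
      rw [map_div₀, map_neg]
      field_simp
      linear_combination hst'
    refine ⟨hs0, ?_⟩
    apply (algebraMap k ℓ).injective
    rw [map_zero]
    rw [hs0, map_zero, zero_mul, zero_add] at hst'
    exact hst'
  -- basis
  have hcard : Fintype.card (Fin 2) = finrank k ℓ := by simp [hquad]
  let B := basisOfLinearIndependentOfCardEqFinrank hli hcard
  have hBco : ∀ i, B i = ![x₀, (1:ℓ)] i := by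
    intro i; rw [coe_basisOfLinearIndependentOfCardEqFinrank]
  have hspan : ∀ w : ℓ, ∃ s t : k, w = algebraMap k ℓ s + algebraMap k ℓ t * x₀ := by
    intro w
    refine ⟨B.repr w 1, B.repr w 0, ?_⟩
    have hh := B.sum_repr w
    rw [Fin.sum_univ_two, hBco 0, hBco 1] at hh
    simp only [Matrix.cons_val_zero, Matrix.cons_val_one, Matrix.head_cons,
      Algebra.smul_def, mul_one] at hh
    linear_combination -hh
  obtain ⟨m, n, hx2⟩ := hspan (x₀ * x₀)
  have e2 : σ x₀ * σ x₀ = algebraMap k ℓ m + algebraMap k ℓ n * σ x₀ := by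
    have := congrArg σ hx2
    simpa [map_add, map_mul, hfix] using this
  have hne : x₀ - σ x₀ ≠ 0 := sub_ne_zero.2 (fun h => hx₀ h.symm)
  have htr : x₀ + σ x₀ = algebraMap k ℓ n := by
    have key : (x₀ + σ x₀ - algebraMap k ℓ n) * (x₀ - σ x₀) = 0 := by
      linear_combination hx2 - e2
    rcases mul_eq_zero.1 key with h | h
    · linear_combination h
    · exact absurd h hne
  have hinv0 : σ (σ x₀) = x₀ := by
    have hs : σ x₀ = algebraMap k ℓ n - x₀ := by linear_combination htr
    rw [hs, map_sub, hfix, hs]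
    ring
  have hinv : ∀ x, σ (σ x) = x := by
    intro x
    obtain ⟨s, t, hx⟩ := hspan x
    rw [hx]
    simp [map_add, map_mul, hfix, hinv0]
  refine ⟨x₀ - σ x₀, hne, ?_, hinv, ?_⟩
  · rw [map_sub, hinv0]; ring
  · intro w
    obtain ⟨s, t, hw⟩ := hspan w
    refine ⟨s + t * n / 2, t / 2, ?_⟩
    have h2x : (2:ℓ) * x₀ = algebraMap k ℓ n + (x₀ - σ x₀) := by linear_combination htr
    have hF2 : algebraMap k ℓ (2:k) = 2 := map_ofNat _ 2
    rw [hw, map_add, map_div₀, map_div₀, map_mul, hF2]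
    field_simp
    linear_combination (algebraMap k ℓ t) * h2x

section AutoLemmas
variable [Field k] [Field ℓ] [Algebra k ℓ]

lemma isAuto_phiMap (σ : ℓ ≃ₐ[k] ℓ) (c : k × k × k) (a : ℓ) (ha : a ≠ 0)
    (h2 : algebraMap k ℓ c.2.1 * a ^ 2 = algebraMap k ℓ c.2.1)
    (h3 : algebraMap k ℓ c.2.2 * (σ a * a) = algebraMap k ℓ c.2.2) :
    IsAuto σ c (phiMap a) := by
  refine ⟨?_, fun p q => by simp [phiMap, Prod.ext_iff]; ring, fun t p => by
    simp [phiMap, Prod.ext_iff, mul_smul_comm], fun p q => ?_⟩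
  · exact Function.bijective_iff_has_inverse.2
      ⟨phiMap a⁻¹, fun p => by simp [phiMap, inv_mul_cancel_left₀ ha],
        fun p => by simp [phiMap, mul_inv_cancel_left₀ ha]⟩
  · simp only [phiMap, Amul, map_add, map_mul, Prod.mk.injEq]
    constructor
    · linear_combination -(p.2 * q.2) * h2 - (σ p.2 * q.2) * h3
    · ring

lemma isAuto_psiMap (σ : ℓ ≃ₐ[k] ℓ) (c : k × k × k) (a : ℓ) (ha : a ≠ 0)
    (h2 : algebraMap k ℓ c.2.1 * a ^ 2 = algebraMap k ℓ c.2.1)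
    (h3 : algebraMap k ℓ c.2.2 * (σ a * a) = algebraMap k ℓ c.2.2) :
    IsAuto σ c (psiMap σ a) := by
  refine ⟨?_, fun p q => by simp [psiMap, Prod.ext_iff]; ring, fun t p => by
    simp [psiMap, Prod.ext_iff, mul_smul_comm, Algebra.smul_def, map_mul, AlgEquiv.commutes]
    ring, fun p q => ?_⟩
  · exact Function.bijective_iff_has_inverse.2
      ⟨fun p => (σ.symm p.1, σ.symm (a⁻¹ * p.2)),
        fun p => by simp [psiMap, map_mul, inv_mul_cancel_left₀ ha],
        fun p => by simp [psiMap, map_mul, mul_inv_cancel_left₀ ha]⟩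
  · simp only [psiMap, Amul, map_add, map_mul, map_sub, map_one, AlgEquiv.commutes,
      Prod.mk.injEq]
    constructor
    · linear_combination -(σ p.2 * σ q.2) * h2 - (σ (σ p.2) * σ q.2) * h3
    · ring

end AutoLemmas


lemma fun_ne_of_apply_ne {α β : Type*} {f g : α → β} (z : α) (h : f z ≠ g z) : f ≠ g :=
  fun hfg => h (by rw [hfg])

lemma classify [Field k] [Field ℓ] [Algebra k ℓ]
    (hchar : (2 : k) ≠ 0) (hquad : finrank k ℓ = 2)
    (σ : ℓ ≃ₐ[k] ℓ) (hσ : ∃ x : ℓ, σ x ≠ x)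
    (c : k × k × k) (hc : IsAdmissibleTriple σ c) (hc2 : c.2.1 ≠ 0)
    (μ : ℓ × ℓ → ℓ × ℓ) (hμ : IsAuto σ c μ) :
    μ = phiMap (1 : ℓ) ∨ μ = phiMap (-1 : ℓ) ∨
      μ = psiMap σ (1 : ℓ) ∨ μ = psiMap σ (-1 : ℓ) := by
  obtain ⟨δ, hδ0, hσδ, hinv, hdec⟩ := quadStruct hchar hquad σ hσ
  have h2l : (2:ℓ) ≠ 0 := two_ne_zero_l hchar
  obtain ⟨hbij, hadd, hsmul, hmul⟩ := hμ
  set F := algebraMap k ℓ with hF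
  have hfix : ∀ r : k, σ (F r) = F r := fun r => σ.commutes r
  have hsm : ∀ (r : k) (x y : ℓ), r • ((x, y) : ℓ × ℓ) = (F r * x, F r * y) := by
    intro r x y
    rw [Prod.smul_mk, Algebra.smul_def, Algebra.smul_def]
  obtain ⟨d, hdd⟩ : ∃ d : k, δ * δ = F d := by
    obtain ⟨s, t, hst⟩ := hdec (δ * δ)
    have h1 : σ (δ * δ) = δ * δ := by rw [map_mul, hσδ]; ring
    rw [hst, map_add, map_mul, hfix, hfix, hσδ] at h1
    have ht : F t * δ = 0 := by
      have h4 : (2:ℓ) * (F t * δ) = 0 := by linear_combination -h1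
      rcases mul_eq_zero.1 h4 with h' | h'
      · exact absurd h' h2l
      · exact h'
    exact ⟨s, by rw [hst, ht, add_zero]⟩
  have hd0 : F d ≠ 0 := by rw [← hdd]; exact mul_ne_zero hδ0 hδ0
  have hFc2 : F c.2.1 ≠ 0 := algebraMap_ne_zero hc2
  set e := 1 - 2 * c.1 with he
  have hFe : F e = 1 - 2 * F c.1 := by rw [he, map_sub, map_mul, map_one, map_ofNat]
  have hFe0 : F e ≠ 0 := by
    intro h
    have hq : qc σ c δ 0 = 0 := by
      unfold qc
      rw [hσδ]
      simp only [map_zero]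
      linear_combination (1 - 2 * F c.1) * hdd + F d * hFe.symm + F d * h
    exact hδ0 (hc δ 0 hq).1
  have hsum0 : F c.2.1 + F c.2.2 ≠ 0 := by
    intro h
    have hq : qc σ c 0 1 = 0 := by
      unfold qc
      simp only [map_one]
      linear_combination -h
    exact one_ne_zero ((hc 0 1 hq).2)
  have hdif0 : F c.2.1 - F c.2.2 ≠ 0 := by
    intro h
    have hq : qc σ c 0 δ = 0 := by
      unfold qc
      rw [hσδ]
      simp only [map_zero]
      linear_combination -F d * h + (F c.2.2 - F c.2.1) * hdd
    exact hδ0 (hc 0 δ hq).2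
  -- identity element
  have honeL : ∀ z : ℓ × ℓ, Amul σ c ((1:ℓ), (0:ℓ)) z = z := by
    intro z
    simp only [Amul, map_zero, map_one]
    refine Prod.ext ?_ ?_ <;> simp <;> ring
  have honeR : ∀ z : ℓ × ℓ, Amul σ c z ((1:ℓ), (0:ℓ)) = z := by
    intro z
    simp only [Amul]
    refine Prod.ext ?_ ?_ <;> simp
  have hμ1 : μ ((1:ℓ), (0:ℓ)) = ((1:ℓ), (0:ℓ)) := by
    have hL : ∀ y, Amul σ c (μ ((1:ℓ), (0:ℓ))) y = y := by
      intro y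
      obtain ⟨z, rfl⟩ := hbij.2 y
      rw [← hmul, honeL]
    exact (honeR _).symm.trans (hL ((1:ℓ), (0:ℓ)))
  rcases hμδ : μ ((δ:ℓ), (0:ℓ)) with ⟨a, b⟩
  rcases hμu : μ ((0:ℓ), (1:ℓ)) with ⟨p, q⟩
  rcases hμw : μ ((0:ℓ), (δ:ℓ)) with ⟨A, B⟩
  have Estep : ∀ (z w : ℓ × ℓ) (r : k) (v : ℓ × ℓ), Amul σ c z w = r • v →
      Amul σ c (μ z) (μ w) = r • μ v := by
    intro z w r v h
    rw [← hmul, h, hsmul]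
  have P1 : Amul σ c ((δ:ℓ), (0:ℓ)) ((δ:ℓ), (0:ℓ)) = d • (((1:ℓ), (0:ℓ)) : ℓ × ℓ) := by
    rw [hsm]
    refine Prod.ext ?_ ?_ <;> simp [Amul, hσδ]
    linear_combination hdd
  have P2 : Amul σ c ((0:ℓ), (1:ℓ)) ((0:ℓ), (1:ℓ)) =
      (c.2.1 + c.2.2) • (((1:ℓ), (0:ℓ)) : ℓ × ℓ) := by
    rw [hsm, map_add]
    refine Prod.ext ?_ ?_ <;> simp [Amul, hσδ, hF]
  have P3 : Amul σ c ((δ:ℓ), (0:ℓ)) ((0:ℓ), (1:ℓ)) = e • (((0:ℓ), (δ:ℓ)) : ℓ × ℓ) := by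
    rw [hsm, hFe]
    refine Prod.ext ?_ ?_ <;> simp [Amul, hσδ]
    ring
  have P4 : Amul σ c ((0:ℓ), (1:ℓ)) ((δ:ℓ), (0:ℓ)) = (1:k) • (((0:ℓ), (δ:ℓ)) : ℓ × ℓ) := by
    rw [hsm, map_one]
    refine Prod.ext ?_ ?_ <;> simp [Amul, hσδ]
  have P5 : Amul σ c ((0:ℓ), (δ:ℓ)) ((0:ℓ), (δ:ℓ)) =
      ((c.2.1 - c.2.2) * d) • (((1:ℓ), (0:ℓ)) : ℓ × ℓ) := by
    rw [hsm, map_mul, map_sub]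
    refine Prod.ext ?_ ?_ <;> simp [Amul, hσδ]
    linear_combination (F c.2.1 - F c.2.2) * hdd
  have P6 : Amul σ c ((0:ℓ), (1:ℓ)) ((0:ℓ), (δ:ℓ)) =
      (c.2.1 + c.2.2) • (((δ:ℓ), (0:ℓ)) : ℓ × ℓ) := by
    rw [hsm, map_add]
    refine Prod.ext ?_ ?_ <;> simp [Amul, hσδ, hF]
  have P7 : Amul σ c ((0:ℓ), (δ:ℓ)) ((0:ℓ), (1:ℓ)) =
      (c.2.1 - c.2.2) • (((δ:ℓ), (0:ℓ)) : ℓ × ℓ) := by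
    rw [hsm, map_sub]
    refine Prod.ext ?_ ?_ <;> simp [Amul, hσδ]
    ring
  have P8 : Amul σ c ((0:ℓ), (δ:ℓ)) ((δ:ℓ), (0:ℓ)) = d • (((0:ℓ), (1:ℓ)) : ℓ × ℓ) := by
    rw [hsm]
    refine Prod.ext ?_ ?_ <;> simp [Amul, hσδ]
    linear_combination hdd
  have P9 : Amul σ c ((δ:ℓ), (0:ℓ)) ((0:ℓ), (δ:ℓ)) = (e * d) • (((0:ℓ), (1:ℓ)) : ℓ × ℓ) := by
    rw [hsm, map_mul, hFe]
    refine Prod.ext ?_ ?_ <;> simp [Amul, hσδ]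
    linear_combination (1 - 2 * F c.1) * hdd
  have E1 := Estep _ _ _ _ P1
  rw [hμδ, hμ1, hsm] at E1
  have E1a := congrArg Prod.fst E1
  have E1b := congrArg Prod.snd E1
  simp [Amul, ← hF] at E1a E1b
  have E2 := Estep _ _ _ _ P2
  rw [hμu, hμ1, hsm] at E2
  have E2a := congrArg Prod.fst E2
  have E2b := congrArg Prod.snd E2
  simp [Amul, ← hF] at E2a E2b
  have E3 := Estep _ _ _ _ P3
  rw [hμδ, hμu, hμw, hsm] at E3
  have E3a := congrArg Prod.fst E3
  have E3b := congrArg Prod.snd E3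
  simp [Amul, ← hF] at E3a E3b
  have E4 := Estep _ _ _ _ P4
  rw [hμu, hμδ, hμw, one_smul] at E4
  have E4a := congrArg Prod.fst E4
  have E4b := congrArg Prod.snd E4
  simp [Amul, ← hF] at E4a E4b
  have E5 := Estep _ _ _ _ P5
  rw [hμw, hμ1, hsm] at E5
  have E5a := congrArg Prod.fst E5
  have E5b := congrArg Prod.snd E5
  simp [Amul, ← hF] at E5a E5b
  have E6 := Estep _ _ _ _ P6
  rw [hμu, hμw, hμδ, hsm] at E6
  have E6a := congrArg Prod.fst E6
  have E6b := congrArg Prod.snd E6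
  simp [Amul, ← hF] at E6a E6b
  have E7 := Estep _ _ _ _ P7
  rw [hμw, hμu, hμδ, hsm] at E7
  have E7a := congrArg Prod.fst E7
  have E7b := congrArg Prod.snd E7
  simp [Amul, ← hF] at E7a E7b
  have E8 := Estep _ _ _ _ P8
  rw [hμw, hμδ, hμu, hsm] at E8
  have E8a := congrArg Prod.fst E8
  have E8b := congrArg Prod.snd E8
  simp [Amul, ← hF] at E8a E8b
  have E9 := Estep _ _ _ _ P9
  rw [hμδ, hμw, hμu, hsm] at E9
  have E9a := congrArg Prod.fst E9
  have E9b := congrArg Prod.snd E9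
  simp [Amul, ← hF] at E9a E9b
  have Tlem : ∀ x : ℓ, x + ((1 - F c.1) * x + F c.1 * σ x) = 0 →
      σ x = -x ∧ (1 - F c.1) * x = 0 := by
    intro x hx
    have hx' := congrArg σ hx
    simp only [map_add, map_mul, map_sub, map_one, map_zero, hfix, hinv] at hx'
    have hs : σ x = -x := by
      have h4 : (2:ℓ) * (x + σ x) = 0 := by linear_combination hx + hx'
      rcases mul_eq_zero.1 h4 with h' | h'
      · exact absurd h' h2l
      · linear_combination h'
    refine ⟨hs, ?_⟩
    rw [hs] at hx
    have h4 : (2:ℓ) * ((1 - F c.1) * x) = 0 := by linear_combination hx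
    rcases mul_eq_zero.1 h4 with h' | h'
    · exact absurd h' h2l
    · exact h'
  have hcomb : ∀ s1 t1 s2 t2 : k,
      μ (s1 • ((1:ℓ), (0:ℓ)) + t1 • ((δ:ℓ), (0:ℓ)) + s2 • ((0:ℓ), (1:ℓ)) + t2 • ((0:ℓ), (δ:ℓ)))
        = s1 • (((1:ℓ), (0:ℓ)) : ℓ × ℓ) + t1 • (a, b) + s2 • (p, q) + t2 • (A, B) := by
    intro s1 t1 s2 t2
    rw [hadd, hadd, hadd, hsmul, hsmul, hsmul, hsmul, hμ1, hμδ, hμu, hμw]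
  have hzrep : ∀ z : ℓ × ℓ, ∃ s1 t1 s2 t2 : k,
      z = s1 • ((1:ℓ), (0:ℓ)) + t1 • ((δ:ℓ), (0:ℓ)) + s2 • ((0:ℓ), (1:ℓ)) +
        t2 • ((0:ℓ), (δ:ℓ)) := by
    intro z
    obtain ⟨s1, t1, h1⟩ := hdec z.1
    obtain ⟨s2, t2, h2⟩ := hdec z.2
    refine ⟨s1, t1, s2, t2, ?_⟩
    rw [hsm, hsm, hsm, hsm]
    refine Prod.ext ?_ ?_ <;> simp
    · linear_combination h1
    · linear_combination h2
  have himg2 : ∀ z : ℓ × ℓ, ∃ s1 t1 s2 t2 : k,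
      μ z = s1 • (((1:ℓ), (0:ℓ)) : ℓ × ℓ) + t1 • (a, b) + s2 • (p, q) + t2 • (A, B) := by
    intro z
    obtain ⟨s1, t1, s2, t2, hz⟩ := hzrep z
    exact ⟨s1, t1, s2, t2, by rw [hz, hcomb]⟩
  have hnosub : ¬(b = 0 ∧ q = 0 ∧ B = 0) := by
    rintro ⟨hb, hq, hB⟩
    obtain ⟨z, hz⟩ := hbij.2 ((0:ℓ), (1:ℓ))
    obtain ⟨s1, t1, s2, t2, hrep⟩ := himg2 z
    rw [hz] at hrep
    have h1 := congrArg Prod.snd hrep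
    simp [hsm, hb, hq, hB] at h1
  have hb0 : b = 0 := by
    by_contra hb
    have hTa := Tlem a (by
      rcases mul_eq_zero.1 (show b * (a + ((1 - F c.1) * a + F c.1 * σ a)) = 0 by
        linear_combination E1b) with h' | h'
      · exact absurd h' hb
      · exact h')
    obtain ⟨hsa, h1a⟩ := hTa
    by_cases hq : q = 0
    · -- branch q = 0
      subst hq
      simp only [map_zero, mul_zero, zero_mul, add_zero, zero_add] at E2a E2b E3a E3b E4a E4b E6a E6b E7a E7b E8a E8b E9a E9b
      have hp2 : p * p = F c.2.1 + F c.2.2 := by linear_combination E2a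
      have hp0 : p ≠ 0 := by
        intro h
        rw [h] at hp2
        exact hsum0 (by linear_combination -hp2)
      have hσp : σ p = -p := by
        have hfp : σ p * σ p = p * p := by
          have h := congrArg σ hp2
          simp only [map_add, map_mul, hfix] at h
          rw [hp2, h]
        have hne : σ p ≠ p := by
          intro hsp
          have hq0 : qc σ c p 1 = 0 := by
            unfold qc
            rw [hsp, map_one]
            linear_combination hp2
          exact hp0 (hc p 1 hq0).1
        rcases mul_eq_zero.1 (show (σ p - p) * (σ p + p) = 0 by linear_combination hfp)
          with h' | h'
        · exact absurd (by linear_combination h') hne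
        · linear_combination h'
      have hFe1 : F e ≠ 1 := by
        intro hfe1
        have hq0 : qc σ c p 1 = 0 := by
          unfold qc
          rw [hσp, map_one]
          linear_combination (1 - 2 * F c.1) * hp2 + (F c.2.1 + F c.2.2) * hFe.symm +
            (F c.2.1 + F c.2.2) * hfe1
        exact hp0 (hc p 1 hq0).1
      have hτp : (1 - F c.1) * p + F c.1 * σ p = F e * p := by
        rw [hσp, hFe]; ring
      have hB : B = F e * p * b := by linear_combination -E4b + b * hτp
      have hB0 : B ≠ 0 := by rw [hB]; exact mul_ne_zero (mul_ne_zero hFe0 hp0) hb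
      have hTA := Tlem A (by
        rcases mul_eq_zero.1 (show B * (A + ((1 - F c.1) * A + F c.1 * σ A)) = 0 by
          linear_combination E5b) with h' | h'
        · exact absurd h' hB0
        · exact h')
      obtain ⟨hsA, h1A⟩ := hTA
      have hA : A = p * a := by linear_combination -E4a
      have hA0 : A = 0 := by
        have hσA : σ A = A := by rw [hA, map_mul, hσp, hsa]; ring
        have h4 : (2:ℓ) * A = 0 := by linear_combination hsA - hσA
        rcases mul_eq_zero.1 h4 with h' | h'
        · exact absurd h' h2l
        · exact h'
      have ha0 : a = 0 := by
        rcases mul_eq_zero.1 (show p * a = 0 by rw [← hA, hA0]) with h' | h'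
        · exact absurd h' hp0
        · exact h'
      have hee : F e * F e = 1 := by
        have h := E3b
        rw [hB] at h
        have h4 : p * b * (1 - F e * F e) = 0 := by linear_combination h
        rcases mul_eq_zero.1 h4 with h' | h'
        · rcases mul_eq_zero.1 h' with h'' | h''
          · exact absurd h'' hp0
          · exact absurd h'' hb
        · linear_combination -h'
      have hK : (F e * (F c.2.1 + F c.2.2)) * b = (F c.2.1 - F c.2.2) * b := by
        linear_combination E7b - p * hB - F e * b * hp2
      have hK' : F e * (F c.2.1 + F c.2.2) = F c.2.1 - F c.2.2 := mul_right_cancel₀ hb hK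
      rcases mul_eq_zero.1 (show (F e - 1) * (F e + 1) = 0 by linear_combination hee)
        with h' | h'
      · exact hFe1 (by linear_combination h')
      · have h4 : (2:ℓ) * F c.2.1 = 0 := by
          linear_combination (F c.2.1 + F c.2.2) * h' - hK'
        rcases mul_eq_zero.1 h4 with h'' | h''
        · exact h2l h''
        · exact hFc2 h''
    · -- branch q ≠ 0
      have hTp := Tlem p (by
        rcases mul_eq_zero.1 (show q * (p + ((1 - F c.1) * p + F c.1 * σ p)) = 0 by
          linear_combination E2b) with h' | h'
        · exact absurd h' hq
        · exact h')
      obtain ⟨hσp, h1p⟩ := hTp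
      have hτp : (1 - F c.1) * p + F c.1 * σ p = -p := by rw [hσp]; linear_combination 2 * h1p
      by_cases hB : B = 0
      · -- B = 0
        by_cases ha : a = 0
        · -- a = 0
          have hp0 : p = 0 := by
            have h4 : p * b = 0 := by linear_combination -E4b + b * hτp + q * ha - hB
            rcases mul_eq_zero.1 h4 with h' | h'
            · exact h'
            · exact absurd h' hb
          subst ha; subst hp0; subst hB
          simp only [map_zero, mul_zero, zero_mul, add_zero, zero_add] at E1a E2a E4a E5a E6b E7b E8b E9b
          -- E6b : q*A = (Fc2+Fc3)*b ; E7b : τA*q = (Fc2-Fc3)*b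
          -- E8b : τA*b = Fd*q ; E9b : b*A = Fe*Fd*q
          -- E4a : θ(q)*b = A ; E2a : θ(q)*q = Fc2+Fc3 ; E5a : A*A = (Fc2-Fc3)*Fd
          have hY : 2 * F c.2.1 * (b * b) = (1 + F e) * (F d * (q * q)) := by
            linear_combination -b * E6b - b * E7b + q * E8b + q * E9b
          have hZ1 : (F c.2.1 + F c.2.2) * (b * b) = F e * F d * (q * q) := by
            linear_combination q * E9b - b * b * E2a + q * b * E4a
          have hZ2 : (F c.2.1 + F c.2.2) * (F c.2.1 + F c.2.2) * (b * b) =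
              (F c.2.1 - F c.2.2) * F d * (q * q) := by
            linear_combination q * q * E5a +
              ((F c.2.1 + F c.2.2) * b + q * A) * (q * E4a - b * E2a)
          have hqq0 : q * q ≠ 0 := mul_ne_zero hq hq
          have hG1 : F e * (F c.2.1 + F c.2.2) = F c.2.1 - F c.2.2 := by
            have h4 : (F e * (F c.2.1 + F c.2.2) - (F c.2.1 - F c.2.2)) * (F d * (q * q)) = 0 := by
              linear_combination hZ2 - (F c.2.1 + F c.2.2) * hZ1
            rcases mul_eq_zero.1 h4 with h' | h'
            · linear_combination h'
            · exact absurd h' (mul_ne_zero hd0 hqq0)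
          have hG2 : 2 * F c.2.1 * F e = (1 + F e) * (F c.2.1 + F c.2.2) := by
            have h4 : (2 * F c.2.1 * F e - (1 + F e) * (F c.2.1 + F c.2.2)) *
                (F d * (q * q)) = 0 := by
              linear_combination (F c.2.1 + F c.2.2) * hY - 2 * F c.2.1 * hZ1
            rcases mul_eq_zero.1 h4 with h' | h'
            · linear_combination h'
            · exact absurd h' (mul_ne_zero hd0 hqq0)
          have hFe1 : F e = 1 := by
            have h4 : (2:ℓ) * F c.2.1 * (F e - 1) = 0 := by linear_combination hG2 + hG1
            rcases mul_eq_zero.1 h4 with h' | h'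
            · rcases mul_eq_zero.1 h' with h'' | h''
              · exact absurd h'' h2l
              · exact absurd h'' hFc2
            · linear_combination h'
          have hc30 : F c.2.2 = 0 := by
            have h4 : (2:ℓ) * F c.2.2 = 0 := by
              linear_combination hG1 - (F c.2.1 + F c.2.2) * hFe1
            rcases mul_eq_zero.1 h4 with h' | h'
            · exact absurd h' h2l
            · exact h'
          have hqcb : qc σ c δ b = 0 := by
            unfold qc
            rw [hσδ]
            linear_combination (1 - 2 * F c.1) * hdd + F d * hFe.symm + F d * hFe1 - E1a
          exact hδ0 (hc δ b hqcb).1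
        · -- a ≠ 0
          have hc11 : 1 - F c.1 = 0 := by
            rcases mul_eq_zero.1 h1a with h' | h'
            · exact h'
            · exact absurd h' ha
          have hFem : F e = -1 := by rw [hFe]; linear_combination 2 * hc11
          have hsum2 : b * (A + ((1 - F c.1) * A + F c.1 * σ A)) = (1 + F e) * (F d * q) := by
            linear_combination E8b + E9b - a * hB - ((1 - F c.1) * a + F c.1 * σ a) * hB
          rw [hFem] at hsum2
          have hTAz : A + ((1 - F c.1) * A + F c.1 * σ A) = 0 := by
            rcases mul_eq_zero.1 (show b * (A + ((1 - F c.1) * A + F c.1 * σ A)) = 0 by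
              linear_combination hsum2) with h' | h'
            · exact absurd h' hb
            · exact h'
          have h4 : (2:ℓ) * (F c.2.1 * b) = 0 := by
            linear_combination -E6b - E7b + q * hTAz + B * hτp
          rcases mul_eq_zero.1 h4 with h' | h'
          · exact h2l h'
          · rcases mul_eq_zero.1 h' with h'' | h''
            · exact hFc2 h''
            · exact hb h''
      · -- B ≠ 0
        have hTA := Tlem A (by
          rcases mul_eq_zero.1 (show B * (A + ((1 - F c.1) * A + F c.1 * σ A)) = 0 by
            linear_combination E5b) with h' | h'
          · exact absurd h' hB
          · exact h')
        obtain ⟨hσA, h1A⟩ := hTA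
        have hτA : (1 - F c.1) * A + F c.1 * σ A = -A := by
          rw [hσA]; linear_combination 2 * h1A
        have h4 : (2:ℓ) * (F c.2.1 * b) = 0 := by
          linear_combination -E6b - E7b + B * hτp + q * hτA
        rcases mul_eq_zero.1 h4 with h' | h'
        · exact h2l h'
        · rcases mul_eq_zero.1 h' with h'' | h''
          · exact hFc2 h''
          · exact hb h''
  subst hb0
  simp only [map_zero, mul_zero, zero_mul, add_zero, zero_add] at E1a E1b E2a E2b E3a E3b E4a E4b E5a E5b E6a E6b E7a E7b E8a E8b E9a E9b
  have haa : a * a = F d := by linear_combination E1a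
  have ha0 : a ≠ 0 := by
    intro h
    rw [h] at haa
    exact hd0 (by linear_combination -haa)
  have haδ : a = δ ∨ a = -δ := by
    rcases mul_eq_zero.1 (show (a - δ) * (a + δ) = 0 by linear_combination haa - hdd)
      with h' | h'
    · left; linear_combination h'
    · right; linear_combination h'
  have hσa : σ a = -a := by
    rcases haδ with h | h
    · rw [h, hσδ]
    · rw [h, map_neg, hσδ]
  have hq0 : q ≠ 0 := by
    intro h
    exact hnosub ⟨rfl, h, by linear_combination -E4b + a * h⟩
  have hB : B = q * a := by linear_combination -E4b
  have hB0 : B ≠ 0 := by rw [hB]; exact mul_ne_zero hq0 ha0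
  have hTp := Tlem p (by
    rcases mul_eq_zero.1 (show q * (p + ((1 - F c.1) * p + F c.1 * σ p)) = 0 by
      linear_combination E2b) with h' | h'
    · exact absurd h' hq0
    · exact h')
  obtain ⟨hσp, h1p⟩ := hTp
  have hTA := Tlem A (by
    rcases mul_eq_zero.1 (show B * (A + ((1 - F c.1) * A + F c.1 * σ A)) = 0 by
      linear_combination E5b) with h' | h'
    · exact absurd h' hB0
    · exact h')
  obtain ⟨hσA, h1A⟩ := hTA
  have hA : A = p * a := by linear_combination -E4a
  have hA0 : A = 0 := by
    have hσA2 : σ A = A := by rw [hA, map_mul, hσp, hσa]; ring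
    have h4 : (2:ℓ) * A = 0 := by linear_combination hσA - hσA2
    rcases mul_eq_zero.1 h4 with h' | h'
    · exact absurd h' h2l
    · exact h'
  have hp0 : p = 0 := by
    rcases mul_eq_zero.1 (show p * a = 0 by rw [← hA, hA0]) with h' | h'
    · exact h'
    · exact absurd h' ha0
  subst hp0
  subst hA0
  subst hB
  simp only [map_zero, mul_zero, zero_mul, add_zero, zero_add] at E2a E5a
  have hσqa : σ (q * a) = -(σ q * a) := by rw [map_mul, hσa]; ring
  have H2 : (F c.2.1 * (q * q) - F c.2.2 * (σ q * q)) * F d =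
      (F c.2.1 - F c.2.2) * F d := by
    linear_combination E5a - F c.2.2 * (q * a) * hσqa -
      (F c.2.1 * (q * q) - F c.2.2 * (σ q * q)) * haa
  have H2' : F c.2.1 * (q * q) - F c.2.2 * (σ q * q) = F c.2.1 - F c.2.2 :=
    mul_right_cancel₀ hd0 H2
  have hq2 : q * q = 1 := by
    have h4 : (2:ℓ) * F c.2.1 * (q * q - 1) = 0 := by linear_combination E2a + H2'
    rcases mul_eq_zero.1 h4 with h' | h'
    · rcases mul_eq_zero.1 h' with h'' | h''
      · exact absurd h'' h2l
      · exact absurd h'' hFc2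
    · linear_combination h'
  have hqpm : q = 1 ∨ q = -1 := by
    rcases mul_eq_zero.1 (show (q - 1) * (q + 1) = 0 by linear_combination hq2) with h' | h'
    · left; linear_combination h'
    · right; linear_combination h'
  rcases haδ with ha | ha
  · rcases hqpm with hqv | hqv
    · refine Or.inl ?_
      funext z
      obtain ⟨s1, t1, s2, t2, hz⟩ := hzrep z
      rw [hz, hcomb, ha, hqv]
      simp [phiMap, hsm, Prod.ext_iff]
    · refine Or.inr (Or.inl ?_)
      funext z
      obtain ⟨s1, t1, s2, t2, hz⟩ := hzrep z
      rw [hz, hcomb, ha, hqv]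
      simp [phiMap, hsm, Prod.ext_iff]
      ring
  · rcases hqpm with hqv | hqv
    · refine Or.inr (Or.inr (Or.inl ?_))
      funext z
      obtain ⟨s1, t1, s2, t2, hz⟩ := hzrep z
      rw [hz, hcomb, ha, hqv]
      simp [psiMap, hsm, map_add, map_mul, hfix, hσδ, Prod.ext_iff]
      try constructor
      all_goals ring
    · refine Or.inr (Or.inr (Or.inr ?_))
      funext z
      obtain ⟨s1, t1, s2, t2, hz⟩ := hzrep z
      rw [hz, hcomb, ha, hqv]
      simp [psiMap, hsm, map_add, map_mul, hfix, hσδ, Prod.ext_iff]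
      try constructor
      all_goals ring

/-- Let `c` be an `ℓ`-admissible triple. The maps `φ₁, φ₋₁, ψ₁, ψ₋₁` are
four pairwise distinct automorphisms of `A(ℓ, c)`, forming the subgroup of `Aut(A(ℓ, c))`
generated by `φ₋₁` and `ψ₁` (Klein's four-group, as `φ₁ = id` and `φ₋₁∘ψ₁ = ψ₋₁`). Moreover:
(i) if `c₂ = 0`, this subgroup is a proper subgroup of `Aut(A(ℓ, c))` (there is an
automorphism outside it); (ii) if `c₂ ≠ 0`, then `Aut(A(ℓ, c)) = {φ₁, φ₋₁, ψ₁, ψ₋₁}`. -/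
theorem automorphism_group_of_Amul [Field k] [Field ℓ] [Algebra k ℓ]
    (hchar : (2 : k) ≠ 0) (hquad : finrank k ℓ = 2)
    (σ : ℓ ≃ₐ[k] ℓ) (hσ : ∃ x : ℓ, σ x ≠ x)
    (c : k × k × k) (hc : IsAdmissibleTriple σ c) :
    -- the four maps are automorphisms …
    IsAuto σ c (phiMap (1 : ℓ)) ∧ IsAuto σ c (phiMap (-1 : ℓ)) ∧
    IsAuto σ c (psiMap σ (1 : ℓ)) ∧ IsAuto σ c (psiMap σ (-1 : ℓ)) ∧
    -- … and are pairwise distinct (so ⟨φ₋₁, ψ₁⟩ is Klein's four-group)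
    List.Pairwise (· ≠ ·)
      [phiMap (1 : ℓ), phiMap (-1 : ℓ), psiMap σ (1 : ℓ), psiMap σ (-1 : ℓ)] ∧
    -- (i)
    (c.2.1 = 0 → ∃ μ : ℓ × ℓ → ℓ × ℓ, IsAuto σ c μ ∧
      μ ≠ phiMap (1 : ℓ) ∧ μ ≠ phiMap (-1 : ℓ) ∧
      μ ≠ psiMap σ (1 : ℓ) ∧ μ ≠ psiMap σ (-1 : ℓ)) ∧
    -- (ii)
    (c.2.1 ≠ 0 → ∀ μ : ℓ × ℓ → ℓ × ℓ, IsAuto σ c μ ↔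
      (μ = phiMap (1 : ℓ) ∨ μ = phiMap (-1 : ℓ) ∨
       μ = psiMap σ (1 : ℓ) ∨ μ = psiMap σ (-1 : ℓ))) := by
  obtain ⟨δ, hδ0, hσδ, hinv, hdec⟩ := quadStruct hchar hquad σ hσ
  have h2l : (2:ℓ) ≠ 0 := two_ne_zero_l hchar
  obtain ⟨x₀, hx₀⟩ := hσ
  have hφ1 : IsAuto σ c (phiMap (1:ℓ)) := isAuto_phiMap σ c 1 one_ne_zero (by ring) (by simp)
  have hφm : IsAuto σ c (phiMap (-1:ℓ)) :=
    isAuto_phiMap σ c (-1) (by norm_num) (by ring) (by simp)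
  have hψ1 : IsAuto σ c (psiMap σ (1:ℓ)) := isAuto_psiMap σ c 1 one_ne_zero (by ring) (by simp)
  have hψm : IsAuto σ c (psiMap σ (-1:ℓ)) :=
    isAuto_psiMap σ c (-1) (by norm_num) (by ring) (by simp)
  have hne1 : (1:ℓ) ≠ -1 := by intro h; apply h2l; linear_combination h
  have d12 : phiMap (1:ℓ) ≠ phiMap (-1:ℓ) := by
    apply fun_ne_of_apply_ne ((0:ℓ), (1:ℓ))
    simp [phiMap, Prod.ext_iff]
    exact hne1
  have d13 : phiMap (1:ℓ) ≠ psiMap σ (1:ℓ) := by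
    apply fun_ne_of_apply_ne ((x₀:ℓ), (0:ℓ))
    simp [phiMap, psiMap, Prod.ext_iff]
    exact fun h => hx₀ h.symm
  have d14 : phiMap (1:ℓ) ≠ psiMap σ (-1:ℓ) := by
    apply fun_ne_of_apply_ne ((x₀:ℓ), (0:ℓ))
    simp [phiMap, psiMap, Prod.ext_iff]
    exact fun h => hx₀ h.symm
  have d23 : phiMap (-1:ℓ) ≠ psiMap σ (1:ℓ) := by
    apply fun_ne_of_apply_ne ((x₀:ℓ), (0:ℓ))
    simp [phiMap, psiMap, Prod.ext_iff]
    exact fun h => hx₀ h.symm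
  have d24 : phiMap (-1:ℓ) ≠ psiMap σ (-1:ℓ) := by
    apply fun_ne_of_apply_ne ((x₀:ℓ), (0:ℓ))
    simp [phiMap, psiMap, Prod.ext_iff]
    exact fun h => hx₀ h.symm
  have d34 : psiMap σ (1:ℓ) ≠ psiMap σ (-1:ℓ) := by
    apply fun_ne_of_apply_ne ((0:ℓ), (1:ℓ))
    simp [phiMap, psiMap, Prod.ext_iff]
    exact hne1
  refine ⟨hφ1, hφm, hψ1, hψm, ?_, ?_, ?_⟩
  · refine .cons ?_ (.cons ?_ (.cons ?_ (.cons (by simp) .nil)))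
    · intro b hb
      simp only [List.mem_cons, List.mem_singleton, List.not_mem_nil, or_false] at hb
      rcases hb with rfl | rfl | rfl
      exacts [d12, d13, d14]
    · intro b hb
      simp only [List.mem_cons, List.mem_singleton, List.not_mem_nil, or_false] at hb
      rcases hb with rfl | rfl
      exacts [d23, d24]
    · intro b hb
      simp only [List.mem_singleton, List.not_mem_nil, List.mem_cons, or_false] at hb
      rcases hb with rfl
      exact d34
  · -- part (i)
    intro hc20
    set t : ℓ := 1 + δ with ht
    have hσt : σ t = 1 - δ := by rw [ht, map_add, map_one, hσδ]; ring
    have ht0 : t ≠ 0 := by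
      intro h
      have hδ : δ = -1 := by rw [ht] at h; linear_combination h
      have h1 := hσδ
      rw [hδ, map_neg, map_one] at h1
      exact hne1 (by linear_combination -h1)
    have hσt0 : σ t ≠ 0 := fun h => ht0 (σ.injective (by rw [h, map_zero]))
    set a : ℓ := σ t * t⁻¹ with ha
    have ha0 : a ≠ 0 := mul_ne_zero hσt0 (inv_ne_zero ht0)
    have hσa : σ a = t * (σ t)⁻¹ := by rw [ha, map_mul, map_inv₀, hinv]
    have hnorm : σ a * a = 1 := by
      rw [hσa, ha]
      field_simp
    have ha1 : a ≠ 1 := by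
      intro h
      rw [ha] at h
      have hst : σ t = t := by field_simp at h; exact h
      rw [hσt, ht] at hst
      apply hδ0
      have h4 : (2:ℓ) * δ = 0 := by linear_combination -hst
      rcases mul_eq_zero.1 h4 with h' | h'
      · exact absurd h' h2l
      · exact h'
    have ham : a ≠ -1 := by
      intro h
      rw [ha] at h
      have hst : σ t = -t := by
        field_simp at h
        linear_combination h
      rw [hσt, ht] at hst
      exact h2l (by linear_combination hst)
    refine ⟨phiMap a, isAuto_phiMap σ c a ha0 (by rw [hc20]; simp)
      (by rw [hnorm, mul_one]), ?_, ?_, ?_, ?_⟩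
    · apply fun_ne_of_apply_ne ((0:ℓ), (1:ℓ))
      simp [phiMap, Prod.ext_iff]
      exact ha1
    · apply fun_ne_of_apply_ne ((0:ℓ), (1:ℓ))
      simp [phiMap, Prod.ext_iff]
      exact ham
    · apply fun_ne_of_apply_ne ((0:ℓ), (1:ℓ))
      simp [phiMap, psiMap, Prod.ext_iff]
      exact ha1
    · apply fun_ne_of_apply_ne ((0:ℓ), (1:ℓ))
      simp [phiMap, psiMap, Prod.ext_iff]
      exact ham
  · -- part (ii)
    intro hc2 μ
    constructor
    · exact classify hchar hquad σ ⟨x₀, hx₀⟩ c hc hc2 μ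
    · rintro (rfl | rfl | rfl | rfl)
      exacts [hφ1, hφm, hψ1, hψm]
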